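/- Let K be a field, V a K-vector space, ∇ : V → V a K-linear map, T_1,…,T_m pairwise distinct nonzero elements of K, and H_1,…,H_m ∈ V with ∇H_i = T_i·H_i for each i. Set Φ_μ := Σ_{j=1}^{m} (∏_{s≠j}(1 − T_j/T_s))^{-1}·H_j. Let T_μ be a nonzero element of K, set x_i := T_μ/T_i for 1 ≤ i ≤ m, and let x_0, u_0, u_1, …, u_m ∈ K satisfy ∏_{s=0}^{m} x_s = ∏_{s=0}^{m} u_s. Then Σ_{i=1}^{m} x_i^{-1}·( ∏_{s=0}^{m}(u_s − x_i) )·( ∏_{1≤s≤m, s≠i}(x_s − x_i) )^{-1}·H_i = Σ_{k=1}^{m} T_μ^{-(m−k)}·( e_{m+1−k}(x_0,x_1,…,x_m) − e_{m+1−k}(u_0,u_1,…,u_m) )·(−∇)^{m−k}Φ_μ. -/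

import Mathlib

/-- The elementary symmetric function `e_r` of the family `(f i)_{i ∈ s}`,
with the conventions `e_0 = 1` and `e_r = 0` for `r > #s`. -/
def esym {ι : Type*} [DecidableEq ι] {K : Type*} [CommRing K]
    (s : Finset ι) (f : ι → K) (r : ℕ) : K :=
  ∑ A ∈ s.powersetCard r, ∏ i ∈ A, f i

/-- The distinguished element `Φ_μ = ∑_j (∏_{s≠j} (1 - T_j/T_s))⁻¹ • H_j`. -/
noncomputable def Phimu {K : Type*} [Field K] {V : Type*} [AddCommGroup V] [Module K V]
    (m : ℕ) (T : Fin m → K) (H : Fin m → V) : V :=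
  ∑ j, (∏ s ∈ Finset.univ.erase j, (1 - T j / T s))⁻¹ • H j

lemma esym_zero {ι : Type*} [DecidableEq ι] {K : Type*} [CommRing K]
    (s : Finset ι) (f : ι → K) : esym s f 0 = 1 := by
  simp [esym]

lemma esym_card {ι : Type*} [DecidableEq ι] {K : Type*} [CommRing K]
    (s : Finset ι) (f : ι → K) : esym s f s.card = ∏ i ∈ s, f i := by
  rw [esym, Finset.powersetCard_self, Finset.sum_singleton]

lemma prod_sub_esym {ι : Type*} [DecidableEq ι] {K : Type*} [CommRing K]
    (s : Finset ι) (f : ι → K) (t : K) :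
    ∏ i ∈ s, (f i - t) = ∑ r ∈ Finset.range (s.card + 1), esym s f r * (-t) ^ (s.card - r) := by
  simp_rw [sub_eq_add_neg]
  rw [Finset.prod_add, Finset.sum_powerset]
  refine Finset.sum_congr rfl fun r hr => ?_
  rw [esym, Finset.sum_mul]
  refine Finset.sum_congr rfl fun A hA => ?_
  obtain ⟨hAs, hAc⟩ := Finset.mem_powersetCard.1 hA
  rw [Finset.prod_const, Finset.card_sdiff_of_subset hAs, hAc]

lemma prod_neg' {ι : Type*} {K : Type*} [CommRing K] (s : Finset ι) (f : ι → K) :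
    ∏ i ∈ s, (-f i) = (-1) ^ s.card * ∏ i ∈ s, f i := by
  rw [← Finset.prod_const, ← Finset.prod_mul_distrib]
  exact Finset.prod_congr rfl fun i _ => (neg_one_mul _).symm

lemma neg_nabla_pow {K : Type*} [Field K] {V : Type*} [AddCommGroup V] [Module K V]
    {m : ℕ} (nabla : Module.End K V) (T : Fin m → K) (H : Fin m → V)
    (heig : ∀ i, nabla (H i) = T i • H i) (c : Fin m → K) (r : ℕ) :
    ((-nabla) ^ r) (∑ j, c j • H j) = ∑ j, ((-T j) ^ r * c j) • H j := by
  induction r with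
  | zero => simp
  | succ r ih =>
    rw [pow_succ', Module.End.mul_apply, ih, map_sum]
    refine Finset.sum_congr rfl fun j _ => ?_
    rw [LinearMap.neg_apply, map_smul, heig, smul_smul, ← neg_smul]
    congr 1
    ring

lemma final_const {K : Type*} [Field K] (n : ℕ) (X P Q : K) (hX : X ≠ 0) (hP : P ≠ 0) :
    X⁻¹ * Q * ((-1) ^ n * P)⁻¹ = -((P⁻¹ * X ^ n) * ((-X) ^ (n + 1))⁻¹) * Q := by
  rcases Nat.even_or_odd n with he | ho
  · rw [he.neg_one_pow, (he.add_one).neg_pow]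
    field_simp
    ring
  · rw [ho.neg_one_pow, (ho.add_one).neg_pow]
    field_simp
    ring

/-- Theorem 3.3 of Bergeron–Garsia (equivalence of 3.41 and 3.44): with
`x_i := T_μ/T_i` and corner weights satisfying `x_0 x_1 ⋯ x_m = u_0 u_1 ⋯ u_m`,
`∑_{i=1}^m x_i⁻¹ (∏_{s=0}^m (u_s - x_i)) (∏_{s≠i}(x_s - x_i))⁻¹ • H_i
 = ∑_{k=1}^m T_μ^{-(m-k)} (e_{m+1-k}(x_0,…,x_m) - e_{m+1-k}(u_0,…,u_m)) •
     (-∇)^{m-k} Φ_μ`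
(here `k : Fin m` stands for the 1-indexed `k+1`). -/
theorem statement17 {K : Type*} [Field K] {V : Type*} [AddCommGroup V] [Module K V]
    (m : ℕ) (T : Fin m → K) (hT0 : ∀ i, T i ≠ 0) (hTinj : Function.Injective T)
    (nabla : Module.End K V) (H : Fin m → V)
    (heig : ∀ i, nabla (H i) = T i • H i)
    (Tμ : K) (hTμ : Tμ ≠ 0)
    (x₀ u₀ : K) (u : Fin m → K)
    (hprod : x₀ * ∏ i, (Tμ / T i) = u₀ * ∏ i, u i) :
    ∑ i, ((Tμ / T i)⁻¹ * ((u₀ - Tμ / T i) * ∏ s, (u s - Tμ / T i)) *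
        (∏ s ∈ Finset.univ.erase i, (Tμ / T s - Tμ / T i))⁻¹) • H i =
      ∑ k : Fin m, ((Tμ ^ (m - 1 - (k : ℕ)))⁻¹ *
        (esym Finset.univ (Fin.cases x₀ (fun i => Tμ / T i) : Fin (m + 1) → K)
            (m - (k : ℕ)) -
         esym Finset.univ (Fin.cases u₀ u : Fin (m + 1) → K) (m - (k : ℕ)))) •
        ((-nabla) ^ (m - 1 - (k : ℕ))) (Phimu m T H) := by
  classical
  rcases m with _ | n
  · simp
  simp only [Nat.add_sub_cancel]
  set x : Fin (n + 1) → K := fun i => Tμ / T i with hxdef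
  have hx0 : ∀ i, x i ≠ 0 := fun i => div_ne_zero hTμ (hT0 i)
  set c : Fin (n + 1) → K :=
    fun j => (∏ s ∈ Finset.univ.erase j, (1 - T j / T s))⁻¹ with hcdef
  have hPhi : ∀ r : ℕ, ((-nabla) ^ r) (Phimu (n + 1) T H)
      = ∑ j, ((-T j) ^ r * c j) • H j :=
    fun r => neg_nabla_pow nabla T H heig c r
  simp only [hPhi, Finset.smul_sum, smul_smul]
  rw [Finset.sum_comm]
  refine Finset.sum_congr rfl fun j _ => ?_
  rw [← Finset.sum_smul]
  congr 1
  -- scalar identity per j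
  have hxj : x j ≠ 0 := hx0 j
  have hxne : -(x j) ≠ 0 := neg_ne_zero.2 hxj
  have hxinj : ∀ s, s ≠ j → x s - x j ≠ 0 := by
    intro s hs
    rw [sub_ne_zero]
    intro h
    apply hs
    apply hTinj
    have h' : Tμ / T s = Tμ / T j := h
    field_simp [hT0 s, hT0 j] at h'
    exact h'.symm
  -- expansion of the corner products via elementary symmetric functions
  have hgen : ∀ (a : K) (f : Fin (n + 1) → K),
      (a - x j) * ∏ s, (f s - x j)
        = ∑ r ∈ Finset.range (n + 3),
            esym Finset.univ (Fin.cases a f : Fin (n + 2) → K) r * (-(x j)) ^ (n + 2 - r) := by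
    intro a f
    have h := prod_sub_esym (Finset.univ : Finset (Fin (n + 2))) (Fin.cases a f) (x j)
    rw [Fin.prod_univ_succ] at h
    simpa using h
  have hxz : (x₀ - x j) * ∏ s, (x s - x j) = 0 := by
    rw [Finset.prod_eq_zero (Finset.mem_univ j) (sub_self (x j)), mul_zero]
  have etop : esym Finset.univ (Fin.cases x₀ x : Fin (n + 2) → K) (n + 2)
      = esym Finset.univ (Fin.cases u₀ u : Fin (n + 2) → K) (n + 2) := by
    have h1 := esym_card (Finset.univ : Finset (Fin (n + 2))) (Fin.cases x₀ x)
    have h2 := esym_card (Finset.univ : Finset (Fin (n + 2))) (Fin.cases u₀ u)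
    simp only [Finset.card_univ, Fintype.card_fin] at h1 h2
    rw [h1, h2, Fin.prod_univ_succ (Fin.cases x₀ x), Fin.prod_univ_succ (Fin.cases u₀ u)]
    simp only [Fin.cases_zero, Fin.cases_succ]
    exact hprod
  have key : (u₀ - x j) * ∏ s, (u s - x j)
      = ∑ k ∈ Finset.range (n + 1),
          (esym Finset.univ (Fin.cases u₀ u : Fin (n + 2) → K) (k + 1)
            - esym Finset.univ (Fin.cases x₀ x : Fin (n + 2) → K) (k + 1))
            * (-(x j)) ^ (n + 1 - k) := by
    have step1 : (u₀ - x j) * ∏ s, (u s - x j)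
        = ∑ r ∈ Finset.range (n + 3),
            (esym Finset.univ (Fin.cases u₀ u : Fin (n + 2) → K) r
              - esym Finset.univ (Fin.cases x₀ x : Fin (n + 2) → K) r)
              * (-(x j)) ^ (n + 2 - r) := by
      rw [← sub_zero ((u₀ - x j) * ∏ s, (u s - x j)), ← hxz, hgen u₀ u, hgen x₀ x,
        ← Finset.sum_sub_distrib]
      exact Finset.sum_congr rfl fun r _ => (sub_mul _ _ _).symm
    rw [step1, Finset.sum_range_succ' _ (n + 2), esym_zero, esym_zero, sub_self, zero_mul,
      add_zero, Finset.sum_range_succ, etop, sub_self, zero_mul, add_zero]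
    exact Finset.sum_congr rfl fun r _ => by rw [Nat.succ_sub_succ]
  -- rewrite the RHS sum: reindex, reflect
  rw [Fin.sum_univ_eq_sum_range (fun k : ℕ => (Tμ ^ (n - k))⁻¹ *
      (esym Finset.univ (fun i => (Fin.cases x₀ x : Fin (n + 2) → K) i) (n + 1 - k) -
        esym Finset.univ (fun i => (Fin.cases u₀ u : Fin (n + 2) → K) i) (n + 1 - k)) *
      ((-T j) ^ (n - k) * c j)) (n + 1), ← Finset.sum_range_reflect]
  have hre : ∀ k ∈ Finset.range (n + 1),
      (Tμ ^ (n - (n + 1 - 1 - k)))⁻¹ *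
          (esym Finset.univ (fun i => (Fin.cases x₀ x : Fin (n + 2) → K) i) (n + 1 - (n + 1 - 1 - k)) -
            esym Finset.univ (fun i => (Fin.cases u₀ u : Fin (n + 2) → K) i) (n + 1 - (n + 1 - 1 - k))) *
        ((-T j) ^ (n - (n + 1 - 1 - k)) * c j)
      = -(c j * ((-(x j)) ^ (n + 1))⁻¹) *
          ((esym Finset.univ (Fin.cases u₀ u : Fin (n + 2) → K) (k + 1)
            - esym Finset.univ (Fin.cases x₀ x : Fin (n + 2) → K) (k + 1))
            * (-(x j)) ^ (n + 1 - k)) := by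
    intro k hk
    have hk' : k < n + 1 := Finset.mem_range.1 hk
    have e0a : n - (n + 1 - 1 - k) = k := by omega
    have e0b : n + 1 - (n + 1 - 1 - k) = k + 1 := by omega
    rw [e0a, e0b]
    have e1 : (-T j) = Tμ * (-(x j))⁻¹ := by
      rw [eq_mul_inv_iff_mul_eq₀ hxne]
      show -T j * -(Tμ / T j) = Tμ
      rw [neg_mul_neg]
      exact mul_div_cancel₀ Tμ (hT0 j)
    have e2 : (-(x j)) ^ (n + 1 - k) = (-(x j)) ^ (n + 1) * ((-(x j)) ^ k)⁻¹ := by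
      rw [eq_mul_inv_iff_mul_eq₀ (pow_ne_zero _ hxne),
        pow_sub_mul_pow (-(x j)) (by omega : k ≤ n + 1)]
    rw [e1, e2, mul_pow]
    field_simp
    have hz : (-(1 / x j)) ^ k * (-x j) ^ k = 1 := by
      rw [← mul_pow, neg_mul_neg, one_div, inv_mul_cancel₀ hxj, one_pow]
    rw [mul_assoc _ _ (c j), mul_comm ((-(1 / x j)) ^ k) (c j), mul_assoc, mul_assoc, hz, mul_one]
    ring
  rw [Finset.sum_congr rfl hre, ← Finset.mul_sum, ← key]
  -- final constant identity
  have hcard : (Finset.univ.erase j).card = n := by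
    rw [Finset.card_erase_of_mem (Finset.mem_univ j), Finset.card_univ, Fintype.card_fin]
    omega
  have hfac : ∀ s ∈ Finset.univ.erase j, 1 - T j / T s = (x j - x s) * (x j)⁻¹ := by
    intro s _
    rw [hxdef]
    field_simp [hT0 s, hT0 j]
  have hc : c j = (∏ s ∈ Finset.univ.erase j, (x j - x s))⁻¹ * (x j) ^ n := by
    rw [hcdef]
    simp only []
    rw [Finset.prod_congr rfl hfac, Finset.prod_mul_distrib, Finset.prod_const, hcard,
      mul_inv, inv_pow, inv_inv]
  have hsign : (∏ s ∈ Finset.univ.erase j, (x s - x j))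
      = (-1) ^ n * ∏ s ∈ Finset.univ.erase j, (x j - x s) := by
    calc (∏ s ∈ Finset.univ.erase j, (x s - x j))
        = ∏ s ∈ Finset.univ.erase j, -(x j - x s) := by
          exact Finset.prod_congr rfl fun s _ => (neg_sub _ _).symm
      _ = (-1) ^ n * ∏ s ∈ Finset.univ.erase j, (x j - x s) := by
          rw [prod_neg', hcard]
  have hPne : (∏ s ∈ Finset.univ.erase j, (x j - x s)) ≠ 0 :=
    Finset.prod_ne_zero_iff.2 fun s hs => by
      have h := hxinj s (Finset.ne_of_mem_erase hs)
      intro h'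
      exact h (by linear_combination -h')
  rw [hc, hsign]
  exact final_const n (x j) (∏ s ∈ Finset.univ.erase j, (x j - x s))
    ((u₀ - x j) * ∏ s, (u s - x j)) hxj hPne
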